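/- Every Borel equivalence relation F of index ≤ 2 on a quotient Borel space (X,E) is the orbit equivalence relation of a Borel action of ℤ/2ℤ on (X,E); explicitly, the map f sending x to the unique point y ≠ x with x F y when it exists, and to x otherwise, is a Borel involution of (X,E) generating F. -/

import Mathlib

open MeasureTheory Set

/-- A subset of the quotient is Borel iff its preimage under the projection is Borel. -/
def QBorelSet {X : Type} [MeasurableSpace X] (E : Setoid X) (A : Set (Quotient E)) : Prop :=
  MeasurableSet (Quotient.mk E ⁻¹' A)

/-- A relation between quotient Borel spaces is Borel iff its pullback to the
product of the standard Borel spaces is Borel. -/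
def QBorelRel {X Y : Type} [MeasurableSpace X] [MeasurableSpace Y]
    (E : Setoid X) (F : Setoid Y) (R : Set (Quotient E × Quotient F)) : Prop :=
  MeasurableSet {p : X × Y | (Quotient.mk E p.1, Quotient.mk F p.2) ∈ R}

/-- A function between quotient Borel spaces is Borel iff its graph is a Borel relation. -/
def QBorelFun {X Y : Type} [MeasurableSpace X] [MeasurableSpace Y]
    (E : Setoid X) (F : Setoid Y) (f : Quotient E → Quotient F) : Prop :=
  MeasurableSet {p : X × Y | f (Quotient.mk E p.1) = Quotient.mk F p.2}

/-- `E` is a countable Borel equivalence relation. -/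
def CBER {X : Type} [MeasurableSpace X] (E : Setoid X) : Prop :=
  MeasurableSet {p : X × X | E.r p.1 p.2} ∧ ∀ x : X, {y | E.r x y}.Countable

/-- `E` is smooth: Borel reducible to equality on some standard Borel space. -/
def SmoothRel {X : Type} [MeasurableSpace X] (E : Setoid X) : Prop :=
  ∃ (Y : Type) (_ : MeasurableSpace Y) (_ : StandardBorelSpace Y) (f : X → Y),
    Measurable f ∧ ∀ x y : X, E.r x y ↔ f x = f y

set_option linter.unusedSectionVars false

/- ### Auxiliary development: an elementary proof of the Lusin–Novikov projection theorem
(projections of Borel sets with countable sections are Borel), via a fusion argument using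
the Lusin separation theorem and the Lusin–Souslin injective image theorem. -/

namespace LNProof

open Metric TopologicalSpace

variable {Z : Type} {α : Type}

section SmallDef
variable [MeasurableSpace Z]

/-- `T` is covered by countably many injective Borel images of `f`. -/
def Small (f : Z → α) (T : Set α) : Prop :=
  ∃ S : Set (Set α), S.Countable ∧
    (∀ R ∈ S, ∃ M : Set Z, MeasurableSet M ∧ Set.InjOn f M ∧ R = f '' M) ∧ T ⊆ ⋃₀ S

theorem Small.mono {f : Z → α} {T T' : Set α} (h : Small f T) (hsub : T' ⊆ T) :
    Small f T' := by
  obtain ⟨S, hc, hgood, hcov⟩ := h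
  exact ⟨S, hc, hgood, hsub.trans hcov⟩

theorem small_empty (f : Z → α) : Small f ∅ :=
  ⟨∅, countable_empty, by simp, by simp⟩

theorem Small.iUnion {ι : Type*} [Countable ι] {f : Z → α} {T : ι → Set α}
    (h : ∀ i, Small f (T i)) : Small f (⋃ i, T i) := by
  choose S hc hgood hcov using h
  refine ⟨⋃ i, S i, countable_iUnion hc, ?_, ?_⟩
  · intro R hR
    rcases mem_iUnion.1 hR with ⟨i, hi⟩
    exact hgood i R hi
  · refine iUnion_subset fun i => (hcov i).trans ?_
    exact sUnion_subset_sUnion (subset_iUnion S i)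

theorem Small.union {f : Z → α} {T T' : Set α} (h : Small f T) (h' : Small f T') :
    Small f (T ∪ T') := by
  have := Small.iUnion (f := f) (T := fun b : Bool => bif b then T else T')
    (fun b => by cases b <;> simpa)
  have e : (⋃ b : Bool, bif b then T else T') = T ∪ T' := by
    ext x; simp [mem_iUnion, Bool.exists_bool, or_comm]
  rwa [e] at this

theorem nonempty_of_not_small {f : Z → α} {T : Set α} (h : ¬ Small f T) : T.Nonempty := by
  rcases eq_empty_or_nonempty T with rfl | hT
  · exact absurd (small_empty f) h
  · exact hT

end SmallDef

section Core

variable [MetricSpace Z] [CompleteSpace Z] [SecondCountableTopology Z]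
  [MeasurableSpace Z] [BorelSpace Z]
  [MetricSpace α] [CompleteSpace α] [SecondCountableTopology α]
  [MeasurableSpace α] [BorelSpace α]

theorem analyticSet_inter {β : Type} [TopologicalSpace β] [T2Space β] {s t : Set β}
    (hs : AnalyticSet s) (ht : AnalyticSet t) : AnalyticSet (s ∩ t) := by
  rw [inter_eq_iInter]
  exact AnalyticSet.iInter (fun b => by cases b <;> simpa)

theorem exists_ratSeq : ∃ u : ℕ → ℝ, ∀ {a b : ℝ}, a < b → ∃ n, a < u n ∧ u n < b := by
  obtain ⟨e, he⟩ := exists_surjective_nat ℚ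
  refine ⟨fun n => (e n : ℝ), fun {a b} hab => ?_⟩
  obtain ⟨q, hq1, hq2⟩ := exists_rat_btwn hab
  obtain ⟨n, rfl⟩ := he q
  exact ⟨n, hq1, hq2⟩

/-- The core lemma: if every point of an analytic set `T` has a *unique* `f`-preimage in a
closed set `B`, then `T` is small. This is proved by extending the (analytic) graph of the
inverse map to a Borel functional graph, using the Lusin separation theorem. -/
theorem small_of_unique_preimage [Nonempty Z] {f : Z → α} (hf : Continuous f)
    {T : Set α} {B : Set Z} (hT : AnalyticSet T) (hB : IsClosed B)
    (hx : ∀ x ∈ T, ∃! z, z ∈ B ∧ f z = x) : Small f T := by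
  classical
  set G : Set (α × Z) := {p | p.2 ∈ B ∧ f p.2 = p.1 ∧ p.1 ∈ T} with hGdef
  have hGa : AnalyticSet G := by
    have h1 : AnalyticSet {p : α × Z | p.2 ∈ B} :=
      (hB.preimage continuous_snd).analyticSet
    have h2 : AnalyticSet {p : α × Z | f p.2 = p.1} :=
      (isClosed_eq (hf.comp continuous_snd) continuous_fst).analyticSet
    have h3 : AnalyticSet {p : α × Z | p.1 ∈ T} := hT.preimage continuous_fst
    have : G = ({p : α × Z | p.2 ∈ B} ∩ {p : α × Z | f p.2 = p.1}) ∩ {p : α × Z | p.1 ∈ T} := by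
      ext p; simp [hGdef, and_assoc]
    rw [this]
    exact analyticSet_inter (analyticSet_inter h1 h2) h3
  have hGfun : ∀ x z w, (x, z) ∈ G → (x, w) ∈ G → z = w := by
    intro x z w hz hw
    obtain ⟨u, _, hu⟩ := hx x hz.2.2
    rw [hu z ⟨hz.1, hz.2.1⟩, hu w ⟨hw.1, hw.2.1⟩]
  -- countable family of closed balls in Z
  obtain ⟨ratSeq, ratSeq_surj⟩ := exists_ratSeq
  set v : ℕ → Z := denseSeq Z with hv
  set P : ℕ × ℕ → Set Z := fun i => closedBall (v i.1) (ratSeq i.2) with hP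
  set D : Set Z → Set α := fun P' => Prod.fst '' (G ∩ {p | p.2 ∈ P'}) with hD
  have hDa : ∀ i : ℕ × ℕ, AnalyticSet (D (P i)) := by
    intro i
    refine AnalyticSet.image_of_continuous ?_ continuous_fst
    exact analyticSet_inter hGa ((isClosed_closedBall.preimage continuous_snd).analyticSet)
  have hDdisj : ∀ i j : ℕ × ℕ, Disjoint (P i) (P j) → Disjoint (D (P i)) (D (P j)) := by
    intro i j hij
    rw [disjoint_left]
    rintro x ⟨p, ⟨hpG, hpP⟩, hpx⟩ ⟨q, ⟨hqG, hqP⟩, hqx⟩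
    have : p.2 = q.2 := by
      apply hGfun x
      · rw [← hpx]; exact ⟨hpG.1, hpG.2.1, hpG.2.2⟩
      · rw [← hqx]; exact ⟨hqG.1, hqG.2.1, hqG.2.2⟩
    exact (disjoint_left.1 hij) hpP (this ▸ hqP)
  -- separators
  have hSep : ∀ κ : (ℕ × ℕ) × (ℕ × ℕ), ∃ u : Set α,
      (Disjoint (P κ.1) (P κ.2) → (D (P κ.1) ⊆ u ∧ Disjoint (D (P κ.2)) u)) ∧
      MeasurableSet u := by
    intro κ
    by_cases h : Disjoint (P κ.1) (P κ.2)
    · obtain ⟨u, h1, h2, h3⟩ :=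
        (hDa κ.1).measurablySeparable (hDa κ.2) (hDdisj _ _ h)
      exact ⟨u, fun _ => ⟨h1, h2⟩, h3⟩
    · exact ⟨∅, fun hd => absurd hd h, MeasurableSet.empty⟩
  choose Sep hSep1 hSep2 using hSep
  set Ghat : Set (α × Z) := {p | ∀ κ : (ℕ × ℕ) × (ℕ × ℕ), Disjoint (P κ.1) (P κ.2) →
      ((p.2 ∈ P κ.1 → p.1 ∈ Sep κ) ∧ (p.2 ∈ P κ.2 → p.1 ∉ Sep κ))} with hGhat
  have hGhatMeas : MeasurableSet Ghat := by
    have : Ghat = ⋂ κ : (ℕ × ℕ) × (ℕ × ℕ), {p : α × Z | Disjoint (P κ.1) (P κ.2) →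
        ((p.2 ∈ P κ.1 → p.1 ∈ Sep κ) ∧ (p.2 ∈ P κ.2 → p.1 ∉ Sep κ))} := by
      ext p; simp [hGhat]
    rw [this]
    refine MeasurableSet.iInter fun κ => ?_
    by_cases h : Disjoint (P κ.1) (P κ.2)
    · have : {p : α × Z | Disjoint (P κ.1) (P κ.2) →
          ((p.2 ∈ P κ.1 → p.1 ∈ Sep κ) ∧ (p.2 ∈ P κ.2 → p.1 ∉ Sep κ))} =
          ((Prod.snd ⁻¹' (P κ.1))ᶜ ∪ Prod.fst ⁻¹' (Sep κ)) ∩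
          ((Prod.snd ⁻¹' (P κ.2))ᶜ ∪ Prod.fst ⁻¹' (Sep κ)ᶜ) := by
        ext p
        simp only [mem_setOf_eq, mem_inter_iff, mem_union, mem_compl_iff, mem_preimage]
        constructor
        · intro hp
          obtain ⟨h1, h2⟩ := hp h
          constructor
          · by_cases hm : p.2 ∈ P κ.1
            · exact Or.inr (h1 hm)
            · exact Or.inl hm
          · by_cases hm : p.2 ∈ P κ.2
            · exact Or.inr (h2 hm)
            · exact Or.inl hm
        · rintro ⟨h1, h2⟩ _
          exact ⟨fun hp1 => h1.resolve_left (not_not_intro hp1),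
                 fun hp2 => h2.resolve_left (not_not_intro hp2)⟩
      rw [this]
      have hPm : ∀ i : ℕ × ℕ, MeasurableSet (P i) := fun i => isClosed_closedBall.measurableSet
      exact (((hPm κ.1).preimage measurable_snd).compl.union
          ((hSep2 κ).preimage measurable_fst)).inter
        (((hPm κ.2).preimage measurable_snd).compl.union
          ((hSep2 κ).compl.preimage measurable_fst))
    · have : {p : α × Z | Disjoint (P κ.1) (P κ.2) →
          ((p.2 ∈ P κ.1 → p.1 ∈ Sep κ) ∧ (p.2 ∈ P κ.2 → p.1 ∉ Sep κ))} = univ := by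
        ext p; simp only [mem_setOf_eq, mem_univ, iff_true]
        exact fun hd => absurd hd h
      rw [this]; exact MeasurableSet.univ
  have hGsub : G ⊆ Ghat := by
    rintro ⟨x, z⟩ hp κ hκ
    constructor
    · intro hz
      exact ((hSep1 κ) hκ).1 ⟨(x, z), ⟨hp, hz⟩, rfl⟩
    · intro hz hxSep
      exact (disjoint_left.1 ((hSep1 κ) hκ).2) ⟨(x, z), ⟨hp, hz⟩, rfl⟩ hxSep
  have hGhatFun : ∀ x z w, (x, z) ∈ Ghat → (x, w) ∈ Ghat → z = w := by
    intro x z w hz hw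
    by_contra hne
    have hd : 0 < dist z w := dist_pos.2 hne
    obtain ⟨a, ha⟩ := (denseRange_denseSeq Z).exists_dist_lt z (by positivity : (0:ℝ) < dist z w / 8)
    obtain ⟨b, hb⟩ := (denseRange_denseSeq Z).exists_dist_lt w (by positivity : (0:ℝ) < dist z w / 8)
    obtain ⟨r, hr1, hr2⟩ := ratSeq_surj (show dist z (v a) < dist z w / 4 from
      lt_trans (by exact ha) (by linarith))
    obtain ⟨s, hs1, hs2⟩ := ratSeq_surj (show dist w (v b) < dist z w / 4 from
      lt_trans (by exact hb) (by linarith))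
    set κ : (ℕ × ℕ) × (ℕ × ℕ) := ((a, r), (b, s)) with hκdef
    have hzP : z ∈ P κ.1 := by
      simp only [hP, mem_closedBall]
      exact hr1.le
    have hwP : w ∈ P κ.2 := by
      simp only [hP, mem_closedBall]
      exact hs1.le
    have hdisj : Disjoint (P κ.1) (P κ.2) := by
      rw [disjoint_left]
      intro u hu1 hu2
      simp only [hP, mem_closedBall] at hu1 hu2
      have t1 : dist z w ≤ dist z u + dist u w := dist_triangle _ _ _
      have t2 : dist z u ≤ dist z (v a) + dist (v a) u := dist_triangle _ _ _
      have t3 : dist u w ≤ dist u (v b) + dist (v b) w := dist_triangle _ _ _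
      have e1 : dist (v a) u = dist u (v a) := dist_comm _ _
      have e2 : dist (v b) w = dist w (v b) := dist_comm _ _
      linarith [hr1, hs1, hr2, hs2, hu1, hu2]
    have h1 := (hz κ hdisj).1 hzP
    have h2 := (hw κ hdisj).2 hwP
    exact h2 h1
  -- the Borel injectivity piece
  set M : Set Z := (fun z => (f z, z)) ⁻¹' Ghat with hM
  have hMmeas : MeasurableSet M :=
    hGhatMeas.preimage ((hf.measurable).prodMk measurable_id)
  have hMinj : Set.InjOn f M := by
    intro z hz w hw hfzw
    have hz' : (f z, z) ∈ Ghat := hz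
    have hw' : (f w, w) ∈ Ghat := hw
    exact hGhatFun (f z) z w hz' (by rw [hfzw]; exact hw')
  refine ⟨{f '' M}, countable_singleton _, ?_, ?_⟩
  · rintro R hR
    rw [mem_singleton_iff] at hR
    exact ⟨M, hMmeas, hMinj, hR⟩
  · intro x hxT
    obtain ⟨z, ⟨hzB, hzf⟩, _⟩ := hx x hxT
    have : (x, z) ∈ G := ⟨hzB, hzf, hxT⟩
    have hzM : z ∈ M := by
      have := hGsub this
      simp only [hM, mem_preimage, hzf]
      exact this
    exact ⟨f '' M, mem_singleton _, ⟨z, hzM, hzf⟩⟩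

/-- The splitting lemma for the fusion argument. -/
theorem split_lemma [Nonempty Z] {f : Z → α} (hf : Continuous f)
    {ι : Type} [Finite ι] [DecidableEq ι] [Nonempty ι]
    (g : ι → Set Z) (hgcl : ∀ i, IsClosed (g i))
    {W : Set α} (hW : IsClosed W)
    (j₀ j₁ : ι) (hne : j₀ ≠ j₁) (heq : g j₀ = g j₁)
    (hns : ¬ Small f (W ∩ ⋂ i, f '' g i)) {ε : ℝ} (hε : 0 < ε) :
    ∃ B₀ B₁ : Set Z, IsClosed B₀ ∧ IsClosed B₁ ∧ B₀ ⊆ g j₀ ∧ B₁ ⊆ g j₁ ∧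
      Disjoint B₀ B₁ ∧ (∃ c₀, B₀ ⊆ closedBall c₀ ε) ∧ (∃ c₁, B₁ ⊆ closedBall c₁ ε) ∧
      ¬ Small f (W ∩ ⋂ i, f '' (Function.update (Function.update g j₀ B₀) j₁ B₁) i) := by
  classical
  obtain ⟨ratSeq, ratSeq_surj⟩ := exists_ratSeq
  set v : ℕ → Z := denseSeq Z with hv
  set P : ℕ × ℕ → Set Z := fun i => closedBall (v i.1) (ratSeq i.2) with hP
  set Adm : (ℕ × ℕ) × (ℕ × ℕ) → Prop := fun κ =>
    Disjoint (P κ.1) (P κ.2) ∧ ratSeq κ.1.2 ≤ ε ∧ ratSeq κ.2.2 ≤ ε with hAdm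
  set upd : (ℕ × ℕ) × (ℕ × ℕ) → ι → Set Z := fun κ =>
    Function.update (Function.update g j₀ (g j₀ ∩ P κ.1)) j₁ (g j₁ ∩ P κ.2) with hupd
  set Sk : (ℕ × ℕ) × (ℕ × ℕ) → Set α := fun κ => W ∩ ⋂ i, f '' (upd κ) i with hSk
  by_cases hgood : ∃ κ, Adm κ ∧ ¬ Small f (Sk κ)
  · obtain ⟨κ, ⟨hdisj, hr1, hr2⟩, hns'⟩ := hgood
    refine ⟨g j₀ ∩ P κ.1, g j₁ ∩ P κ.2, (hgcl j₀).inter isClosed_closedBall,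
      (hgcl j₁).inter isClosed_closedBall, inter_subset_left, inter_subset_left,
      hdisj.mono inter_subset_right inter_subset_right,
      ⟨v κ.1.1, inter_subset_right.trans (closedBall_subset_closedBall hr1)⟩,
      ⟨v κ.2.1, inter_subset_right.trans (closedBall_subset_closedBall hr2)⟩, hns'⟩
  · push_neg at hgood
    -- build the Borel small set J
    have hJspec : ∀ κ, ∃ Jk : Set α, MeasurableSet Jk ∧ Small f Jk ∧ (Adm κ → Sk κ ⊆ Jk) := by
      intro κ
      by_cases h : Adm κ
      · obtain ⟨Sf, hc, hgoodSf, hcov⟩ := hgood κ h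
        refine ⟨⋃₀ Sf, MeasurableSet.sUnion hc fun R hR => ?_, ⟨Sf, hc, hgoodSf, subset_rfl⟩,
          fun _ => hcov⟩
        obtain ⟨M, hM, hinj, rfl⟩ := hgoodSf R hR
        exact hM.image_of_measurable_injOn hf.measurable hinj
      · exact ⟨∅, MeasurableSet.empty, ⟨∅, countable_empty, by simp, by simp⟩,
          fun h' => absurd h' h⟩
    choose Jk hJm hJs hJc using hJspec
    set J : Set α := ⋃ κ, Jk κ with hJ
    have hJmeas : MeasurableSet J := MeasurableSet.iUnion hJm
    have hJsmall : Small f J := Small.iUnion hJs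
    set T : Set α := W ∩ ⋂ i, f '' g i with hT
    -- every point of T \ J has a unique preimage in g j₀
    have huniq : ∀ x ∈ T \ J, ∃! z, z ∈ g j₀ ∧ f z = x := by
      rintro x ⟨⟨hxW, hxI⟩, hxJ⟩
      obtain ⟨z, hz, hfz⟩ := (mem_iInter.1 hxI j₀ : x ∈ f '' g j₀)
      refine ⟨z, ⟨hz, hfz⟩, ?_⟩
      rintro w ⟨hw, hfw⟩
      by_contra hwz
      -- two distinct preimages z ≠ w in g j₀ = g j₁; derive x ∈ J
      have hd : 0 < dist w z := dist_pos.2 hwz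
      set δ : ℝ := min ε (dist w z / 4) with hδ
      have hδpos : 0 < δ := lt_min hε (by positivity)
      obtain ⟨a, ha⟩ := (denseRange_denseSeq Z).exists_dist_lt w (half_pos hδpos)
      obtain ⟨b, hb⟩ := (denseRange_denseSeq Z).exists_dist_lt z (half_pos hδpos)
      obtain ⟨r, hr1, hr2⟩ := ratSeq_surj (show dist w (v a) < δ from
        lt_of_lt_of_le (by exact ha) (by linarith))
      obtain ⟨s, hs1, hs2⟩ := ratSeq_surj (show dist z (v b) < δ from
        lt_of_lt_of_le (by exact hb) (by linarith))
      set κ : (ℕ × ℕ) × (ℕ × ℕ) := ((a, r), (b, s)) with hκdef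
      have hwP : w ∈ P κ.1 := by simp only [hP, mem_closedBall]; exact hr1.le
      have hzP : z ∈ P κ.2 := by simp only [hP, mem_closedBall]; exact hs1.le
      have hδε : δ ≤ ε := min_le_left _ _
      have hδd : δ ≤ dist w z / 4 := min_le_right _ _
      have hdisj : Disjoint (P κ.1) (P κ.2) := by
        rw [disjoint_left]
        intro u hu1 hu2
        simp only [hP, mem_closedBall] at hu1 hu2
        have t1 : dist w z ≤ dist w u + dist u z := dist_triangle _ _ _
        have t2 : dist w u ≤ dist w (v a) + dist (v a) u := dist_triangle _ _ _
        have t3 : dist u z ≤ dist u (v b) + dist (v b) z := dist_triangle _ _ _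
        have e1 : dist (v a) u = dist u (v a) := dist_comm _ _
        have e2 : dist (v b) z = dist z (v b) := dist_comm _ _
        linarith
      have hadm : Adm κ := ⟨hdisj, le_trans hr2.le hδε, le_trans hs2.le hδε⟩
      have hxS : x ∈ Sk κ := by
        refine ⟨hxW, mem_iInter.2 fun i => ?_⟩
        by_cases hij1 : i = j₁
        · subst hij1
          have : (upd κ) i = g i ∩ P κ.2 := by
            simp only [hupd, Function.update_self]
          rw [this]
          exact ⟨z, ⟨heq ▸ hz, hzP⟩, hfz⟩
        · by_cases hij0 : i = j₀
          · subst hij0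
            have : (upd κ) i = g i ∩ P κ.1 := by
              simp only [hupd]
              rw [Function.update_of_ne hne, Function.update_self]
            rw [this]
            exact ⟨w, ⟨hw, hwP⟩, hfw⟩
          · have : (upd κ) i = g i := by
              simp only [hupd]
              rw [Function.update_of_ne hij1, Function.update_of_ne hij0]
            rw [this]
            exact mem_iInter.1 hxI i
      exact hxJ (mem_iUnion.2 ⟨κ, hJc κ hadm hxS⟩)
    -- T \ J is analytic
    have hTJa : AnalyticSet (T \ J) := by
      have h1 : AnalyticSet W := hW.analyticSet
      have h2 : AnalyticSet (⋂ i, f '' g i) :=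
        AnalyticSet.iInter fun i => ((hgcl i).analyticSet).image_of_continuous hf
      have h3 : AnalyticSet Jᶜ := hJmeas.compl.analyticSet
      rw [diff_eq]
      exact analyticSet_inter (analyticSet_inter h1 h2) h3
    have hsmallTJ : Small f (T \ J) :=
      small_of_unique_preimage hf hTJa (hgcl j₀) huniq
    have : Small f T := (hsmallTJ.union hJsmall).mono (by
      intro x hx
      by_cases hxJ : x ∈ J
      · exact Or.inr hxJ
      · exact Or.inl ⟨hx, hxJ⟩)
    exact absurd this hns

theorem snoc_ne {n : ℕ} (σ : Fin n → Bool) :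
    (Fin.snoc σ false : Fin (n+1) → Bool) ≠ Fin.snoc σ true := by
  intro h
  have := congrFun h (Fin.last n)
  simp [Fin.snoc_last] at this

theorem snoc_eq_iff {n : ℕ} {σ σ' : Fin n → Bool} {b b' : Bool}
    (h : (Fin.snoc σ b : Fin (n+1) → Bool) = Fin.snoc σ' b') : σ = σ' := by
  have := congrArg Fin.init h
  rwa [Fin.init_snoc, Fin.init_snoc] at this

/-- Iterated splitting over a list of nodes. -/
theorem iter_lemma [Nonempty Z] {f : Z → α} (hf : Continuous f) {n : ℕ}
    {W : Set α} (hW : IsClosed W) {ε : ℝ} (hε : 0 < ε) :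
    ∀ (l : List (Fin n → Bool)) (g : (Fin (n+1) → Bool) → Set Z),
      (∀ τ, IsClosed (g τ)) →
      (∀ σ ∈ l, g (Fin.snoc σ false) = g (Fin.snoc σ true)) →
      l.Nodup →
      ¬ Small f (W ∩ ⋂ τ, f '' g τ) →
      ∃ g' : (Fin (n+1) → Bool) → Set Z,
        (∀ τ, IsClosed (g' τ)) ∧ (∀ τ, g' τ ⊆ g τ) ∧
        (∀ σ ∈ l, Disjoint (g' (Fin.snoc σ false)) (g' (Fin.snoc σ true))) ∧
        (∀ σ ∈ l, (∃ c, g' (Fin.snoc σ false) ⊆ closedBall c ε) ∧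
                  (∃ c, g' (Fin.snoc σ true) ⊆ closedBall c ε)) ∧
        ¬ Small f (W ∩ ⋂ τ, f '' g' τ) := by
  classical
  intro l
  induction l with
  | nil =>
    intro g hcl _ _ hns
    exact ⟨g, hcl, fun τ => subset_rfl, by simp, by simp, hns⟩
  | cons σ l' ih =>
    intro g hcl hdup hnd hns
    obtain ⟨B₀, B₁, hB₀cl, hB₁cl, hB₀sub, hB₁sub, hBdisj, hB₀ball, hB₁ball, hns₁⟩ :=
      split_lemma hf g hcl hW (Fin.snoc σ false) (Fin.snoc σ true) (snoc_ne σ)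
        (hdup σ List.mem_cons_self) hns hε
    set g₁ := Function.update (Function.update g (Fin.snoc σ false) B₀) (Fin.snoc σ true) B₁
      with hg₁
    have hg₁j₀ : g₁ (Fin.snoc σ false) = B₀ := by
      rw [hg₁, Function.update_of_ne (snoc_ne σ), Function.update_self]
    have hg₁j₁ : g₁ (Fin.snoc σ true) = B₁ := by
      rw [hg₁, Function.update_self]
    have hg₁other : ∀ σ' ∈ l', g₁ (Fin.snoc σ' false) = g (Fin.snoc σ' false) ∧
        g₁ (Fin.snoc σ' true) = g (Fin.snoc σ' true) := by
      intro σ' hσ'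
      have hσσ' : σ' ≠ σ := fun h => (List.nodup_cons.1 hnd).1 (h ▸ hσ')
      constructor <;>
      · rw [hg₁, Function.update_of_ne (fun h => hσσ' (snoc_eq_iff h)),
          Function.update_of_ne (fun h => hσσ' (snoc_eq_iff h))]
    have hg₁cl : ∀ τ, IsClosed (g₁ τ) := by
      intro τ
      rw [hg₁]
      by_cases h1 : τ = Fin.snoc σ true
      · rw [h1, Function.update_self]; exact hB₁cl
      · rw [Function.update_of_ne h1]
        by_cases h0 : τ = Fin.snoc σ false
        · rw [h0, Function.update_self]; exact hB₀cl
        · rw [Function.update_of_ne h0]; exact hcl τ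
    have hg₁sub : ∀ τ, g₁ τ ⊆ g τ := by
      intro τ
      rw [hg₁]
      by_cases h1 : τ = Fin.snoc σ true
      · rw [h1, Function.update_self]; exact hB₁sub
      · rw [Function.update_of_ne h1]
        by_cases h0 : τ = Fin.snoc σ false
        · rw [h0, Function.update_self]; exact hB₀sub
        · rw [Function.update_of_ne h0]
    have hdup₁ : ∀ σ' ∈ l', g₁ (Fin.snoc σ' false) = g₁ (Fin.snoc σ' true) := by
      intro σ' hσ'
      rw [(hg₁other σ' hσ').1, (hg₁other σ' hσ').2]
      exact hdup σ' (List.mem_cons_of_mem _ hσ')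
    obtain ⟨g', hg'cl, hg'sub, hg'disj, hg'ball, hg'ns⟩ :=
      ih g₁ hg₁cl hdup₁ (List.nodup_cons.1 hnd).2 hns₁
    refine ⟨g', hg'cl, fun τ => (hg'sub τ).trans (hg₁sub τ), ?_, ?_, hg'ns⟩
    · intro σ' hσ'
      rcases List.mem_cons.1 hσ' with rfl | hmem
      · exact hBdisj.mono ((hg'sub _).trans_eq hg₁j₀) ((hg'sub _).trans_eq hg₁j₁)
      · exact hg'disj σ' hmem
    · intro σ' hσ'
      rcases List.mem_cons.1 hσ' with rfl | hmem
      · obtain ⟨c₀, hc₀⟩ := hB₀ball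
        obtain ⟨c₁, hc₁⟩ := hB₁ball
        exact ⟨⟨c₀, ((hg'sub _).trans_eq hg₁j₀).trans hc₀⟩,
               ⟨c₁, ((hg'sub _).trans_eq hg₁j₁).trans hc₁⟩⟩
      · exact hg'ball σ' hmem

variable (f : Z → α)

/-- State of the fusion construction at stage `n`. -/
structure SchemeState (n : ℕ) : Type where
  g : (Fin n → Bool) → Set Z
  W : Set α
  closed_g : ∀ σ, IsClosed (g σ)
  closed_W : IsClosed W
  bdd_g : ∀ σ, ∃ c, g σ ⊆ closedBall c ((1/2 : ℝ)^n)
  bdd_W : ∃ c, W ⊆ closedBall c ((1/2 : ℝ)^n)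
  ns : ¬ Small f (W ∩ ⋂ σ, f '' g σ)

variable {f}

theorem exists_shrink [Nonempty α] {T : Set α} (hns : ¬ Small f T) {δ : ℝ} (hδ : 0 < δ) :
    ∃ c, ¬ Small f (T ∩ closedBall c δ) := by
  by_contra h
  push_neg at h
  have hcov : T ⊆ ⋃ n, T ∩ closedBall (denseSeq α n) δ := by
    intro x hx
    obtain ⟨n, hn⟩ := (denseRange_denseSeq α).exists_dist_lt x hδ
    exact mem_iUnion.2 ⟨n, hx, mem_closedBall.2 hn.le⟩
  exact hns ((Small.iUnion (fun n => h (denseSeq α n))).mono hcov)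

theorem init_exists [Nonempty Z] [Nonempty α] (hf : Continuous f)
    (hns : ¬ Small f (range f)) : Nonempty (SchemeState f 0) := by
  have hcov : range f ⊆ ⋃ k, f '' closedBall (denseSeq Z k) 1 := by
    rintro x ⟨z, rfl⟩
    obtain ⟨k, hk⟩ := (denseRange_denseSeq Z).exists_dist_lt z one_pos
    exact mem_iUnion.2 ⟨k, z, mem_closedBall.2 hk.le, rfl⟩
  have : ∃ k, ¬ Small f (f '' closedBall (denseSeq Z k) 1) := by
    by_contra h
    push_neg at h
    exact hns ((Small.iUnion h).mono hcov)
  obtain ⟨k, hk⟩ := this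
  obtain ⟨c, hc⟩ := exists_shrink hk one_pos
  refine ⟨⟨fun _ => closedBall (denseSeq Z k) 1, closedBall c 1,
    fun _ => isClosed_closedBall, isClosed_closedBall,
    fun _ => ⟨denseSeq Z k, by simp⟩, ⟨c, by simp⟩, ?_⟩⟩
  have he : ⋂ _σ : Fin 0 → Bool, f '' closedBall (denseSeq Z k) 1
      = f '' closedBall (denseSeq Z k) 1 := iInter_const _
  rw [he, inter_comm]
  exact hc

theorem step_exists [Nonempty Z] [Nonempty α] (hf : Continuous f) {n : ℕ}
    (s : SchemeState f n) :
    ∃ s' : SchemeState f (n+1),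
      (∀ (σ : Fin n → Bool) (b : Bool), s'.g (Fin.snoc σ b) ⊆ s.g σ) ∧
      (∀ σ : Fin n → Bool, Disjoint (s'.g (Fin.snoc σ false)) (s'.g (Fin.snoc σ true))) ∧
      s'.W ⊆ s.W := by
  classical
  set g₀ : (Fin (n+1) → Bool) → Set Z := fun τ => s.g (Fin.init τ) with hg₀
  have hg₀cl : ∀ τ, IsClosed (g₀ τ) := fun τ => s.closed_g _
  have hg₀dup : ∀ σ ∈ (Finset.univ : Finset (Fin n → Bool)).toList,
      g₀ (Fin.snoc σ false) = g₀ (Fin.snoc σ true) := by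
    intro σ _
    simp only [hg₀, Fin.init_snoc]
  have hK : (⋂ τ, f '' g₀ τ) = ⋂ σ, f '' s.g σ := by
    apply subset_antisymm
    · intro x hx
      refine mem_iInter.2 fun σ => ?_
      have := mem_iInter.1 hx (Fin.snoc σ false)
      simpa only [hg₀, Fin.init_snoc] using this
    · intro x hx
      exact mem_iInter.2 fun τ => mem_iInter.1 hx (Fin.init τ)
  have hg₀ns : ¬ Small f (s.W ∩ ⋂ τ, f '' g₀ τ) := by
    rw [hK]; exact s.ns
  obtain ⟨g', hg'cl, hg'sub, hg'disj, hg'ball, hg'ns⟩ :=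
    iter_lemma hf s.closed_W (by positivity : (0:ℝ) < (1/2 : ℝ)^(n+1))
      (Finset.univ : Finset (Fin n → Bool)).toList g₀ hg₀cl hg₀dup
      (Finset.nodup_toList _) hg₀ns
  obtain ⟨c, hc⟩ := exists_shrink hg'ns (by positivity : (0:ℝ) < (1/2 : ℝ)^(n+1))
  have hrw : (s.W ∩ ⋂ τ, f '' g' τ) ∩ closedBall c ((1/2:ℝ)^(n+1)) =
      (s.W ∩ closedBall c ((1/2:ℝ)^(n+1))) ∩ ⋂ τ, f '' g' τ := by
    rw [inter_assoc, inter_assoc, inter_comm (⋂ τ, f '' g' τ)]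
  rw [hrw] at hc
  have hmem : ∀ σ : Fin n → Bool, σ ∈ (Finset.univ : Finset (Fin n → Bool)).toList :=
    fun σ => (Finset.mem_toList).2 (Finset.mem_univ σ)
  refine ⟨⟨g', s.W ∩ closedBall c ((1/2:ℝ)^(n+1)), hg'cl,
    s.closed_W.inter isClosed_closedBall, ?_, ⟨c, inter_subset_right⟩, hc⟩,
    fun σ b => ?_, fun σ => hg'disj σ (hmem σ), inter_subset_left⟩
  · intro τ
    have := hg'ball (Fin.init τ) (hmem _)
    rcases Bool.eq_false_or_eq_true (τ (Fin.last n)) with h | h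
    · obtain ⟨cb, hcb⟩ := this.2
      exact ⟨cb, by rw [← Fin.snoc_init_self τ, h]; exact hcb⟩
    · obtain ⟨cb, hcb⟩ := this.1
      exact ⟨cb, by rw [← Fin.snoc_init_self τ, h]; exact hcb⟩
  · have h1 := hg'sub (Fin.snoc σ b)
    simpa only [hg₀, Fin.init_snoc] using h1

theorem uncountable_funs : ¬ Countable (ℕ → Bool) := by
  intro hcount
  classical
  have hinj : Function.Injective (fun s : Set ℕ => fun n => decide (n ∈ s)) := by
    intro s t hst
    ext n
    have := congrFun hst n
    simpa using this
  have hc : Countable (Set ℕ) := hinj.countable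
  obtain ⟨g, hg⟩ := countable_iff_exists_injective (Set ℕ) |>.1 hc
  exact Function.cantor_injective g hg

/-- If `f` is a continuous map with countable fibers which is not "small" on its range,
we get a contradiction via a fusion argument. -/
theorem small_range (hf : Continuous f) (hfib : ∀ x : α, (f ⁻¹' {x}).Countable)
    [Nonempty Z] [Nonempty α] : Small f (range f) := by
  classical
  by_contra hns
  obtain ⟨s₀⟩ := init_exists hf hns
  let Sch : ∀ n, SchemeState f n := fun n =>
    Nat.rec s₀ (fun n s => (step_exists hf s).choose) n
  have hstep : ∀ n, (∀ (σ : Fin n → Bool) (b : Bool),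
        (Sch (n+1)).g (Fin.snoc σ b) ⊆ (Sch n).g σ) ∧
      (∀ σ : Fin n → Bool,
        Disjoint ((Sch (n+1)).g (Fin.snoc σ false)) ((Sch (n+1)).g (Fin.snoc σ true))) ∧
      (Sch (n+1)).W ⊆ (Sch n).W :=
    fun n => (step_exists hf (Sch n)).choose_spec
  -- prefix of a branch
  have pre_succ : ∀ (ξ : ℕ → Bool) (n : ℕ),
      (fun i : Fin (n+1) => ξ i) = Fin.snoc (fun i : Fin n => ξ i) (ξ n) := by
    intro ξ n
    funext i
    refine Fin.lastCases ?_ ?_ i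
    · simp [Fin.snoc_last]
    · intro j
      simp [Fin.snoc_castSucc]
  set K : (ℕ → Bool) → ℕ → Set Z := fun ξ n => (Sch n).g (fun i => ξ i) with hKdef
  have hKmono : ∀ ξ n, K ξ (n+1) ⊆ K ξ n := by
    intro ξ n
    have h := (hstep n).1 (fun i : Fin n => ξ i) (ξ n)
    simp only [hKdef]
    rw [pre_succ ξ n]
    exact h
  have hKmono' : ∀ ξ n k, K ξ (n + k) ⊆ K ξ n := by
    intro ξ n k
    induction k with
    | zero => exact subset_rfl
    | succ k ih => exact (hKmono ξ (n+k)).trans ih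
  have hKle : ∀ ξ {n m}, n ≤ m → K ξ m ⊆ K ξ n := by
    intro ξ n m hnm
    obtain ⟨k, rfl⟩ := Nat.exists_eq_add_of_le hnm
    exact hKmono' ξ n k
  -- pick points
  have hx : ∀ n, ∃ x, x ∈ (Sch n).W ∩ ⋂ σ, f '' (Sch n).g σ :=
    fun n => nonempty_of_not_small (Sch n).ns
  choose xseq hxseq using hx
  have hwit : ∀ (ξ : ℕ → Bool) (n : ℕ), ∃ z, z ∈ K ξ n ∧ f z = xseq n := by
    intro ξ n
    have := mem_iInter.1 (hxseq n).2 (fun i : Fin n => ξ i)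
    obtain ⟨z, hz, hfz⟩ := this
    exact ⟨z, hz, hfz⟩
  choose wit hwitK hwitf using hwit
  -- Cauchy
  have hdistK : ∀ ξ n, ∀ m m', n ≤ m → n ≤ m' →
      dist (wit ξ m) (wit ξ m') ≤ 2 * (1/2 : ℝ)^n := by
    intro ξ n m m' hm hm'
    obtain ⟨c, hc⟩ := (Sch n).bdd_g (fun i : Fin n => ξ i)
    have h1 : wit ξ m ∈ closedBall c ((1/2 : ℝ)^n) := hc (hKle ξ hm (hwitK ξ m))
    have h2 : wit ξ m' ∈ closedBall c ((1/2 : ℝ)^n) := hc (hKle ξ hm' (hwitK ξ m'))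
    calc dist (wit ξ m) (wit ξ m') ≤ dist (wit ξ m) c + dist c (wit ξ m') := dist_triangle _ _ _
    _ ≤ (1/2 : ℝ)^n + (1/2 : ℝ)^n := by
        rw [dist_comm c]
        exact add_le_add (mem_closedBall.1 h1) (mem_closedBall.1 h2)
    _ = 2 * (1/2 : ℝ)^n := by ring
  have hb0 : Filter.Tendsto (fun n : ℕ => 2 * (1/2 : ℝ)^n) Filter.atTop (nhds 0) := by
    have := tendsto_pow_atTop_nhds_zero_of_lt_one
      (by norm_num : (0:ℝ) ≤ 1/2) (by norm_num : (1/2:ℝ) < 1)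
    simpa using this.const_mul 2
  have hcauchy : ∀ ξ, CauchySeq (wit ξ) := by
    intro ξ
    exact cauchySeq_of_le_tendsto_0 _ (fun n m N hn hm => hdistK ξ N n m hn hm) hb0
  have hlim : ∀ ξ, ∃ z, Filter.Tendsto (wit ξ) Filter.atTop (nhds z) :=
    fun ξ => cauchySeq_tendsto_of_complete (hcauchy ξ)
  choose zlim hzlim using hlim
  -- limit membership
  have hzK : ∀ ξ n, zlim ξ ∈ K ξ n := by
    intro ξ n
    refine ((Sch n).closed_g _).mem_of_tendsto (hzlim ξ) ?_
    filter_upwards [Filter.eventually_ge_atTop n] with m hm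
    exact hKle ξ hm (hwitK ξ m)
  -- common image
  have hfz : ∀ ξ, Filter.Tendsto xseq Filter.atTop (nhds (f (zlim ξ))) := by
    intro ξ
    have h1 : Filter.Tendsto (f ∘ wit ξ) Filter.atTop (nhds (f (zlim ξ))) :=
      (hf.tendsto _).comp (hzlim ξ)
    have h2 : (f ∘ wit ξ) = xseq := funext fun n => hwitf ξ n
    rwa [h2] at h1
  have hfeq : ∀ ξ η, f (zlim ξ) = f (zlim η) :=
    fun ξ η => tendsto_nhds_unique (hfz ξ) (hfz η)
  -- injectivity
  have hzinj : Function.Injective zlim := by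
    intro ξ η hzeq
    by_contra hne
    have hdiff : ∃ n, ξ n ≠ η n := by
      by_contra h
      push_neg at h
      exact hne (funext h)
    set n₀ := Nat.find hdiff with hn₀def
    have hn₀ : ξ n₀ ≠ η n₀ := Nat.find_spec hdiff
    have hmin : ∀ m, m < n₀ → ξ m = η m := by
      intro m hm
      by_contra h
      exact absurd (Nat.find_le h) (not_le.2 hm)
    have hpre : (fun i : Fin n₀ => ξ i) = (fun i : Fin n₀ => η i) :=
      funext fun i => hmin i i.isLt
    have hdisj := (hstep n₀).2.1 (fun i : Fin n₀ => ξ i)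
    have hξmem : zlim ξ ∈ (Sch (n₀+1)).g (Fin.snoc (fun i : Fin n₀ => ξ i) (ξ n₀)) := by
      have h3 : zlim ξ ∈ (Sch (n₀ + 1)).g (fun i : Fin (n₀+1) => ξ i) := hzK ξ (n₀+1)
      rwa [pre_succ ξ n₀] at h3
    have hηmem : zlim η ∈ (Sch (n₀+1)).g (Fin.snoc (fun i : Fin n₀ => ξ i) (η n₀)) := by
      have h3 : zlim η ∈ (Sch (n₀ + 1)).g (fun i : Fin (n₀+1) => η i) := hzK η (n₀+1)
      rw [pre_succ η n₀] at h3
      rwa [← hpre] at h3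
    rw [← hzeq] at hηmem
    cases hbξ : ξ n₀ with
    | false =>
      cases hbη : η n₀ with
      | false => exact hn₀ (hbξ.trans hbη.symm)
      | true =>
        rw [hbξ] at hξmem
        rw [hbη] at hηmem
        exact (disjoint_left.1 hdisj) hξmem hηmem
    | true =>
      cases hbη : η n₀ with
      | false =>
        rw [hbξ] at hξmem
        rw [hbη] at hηmem
        exact (disjoint_left.1 hdisj) hηmem hξmem
      | true => exact hn₀ (hbξ.trans hbη.symm)
  -- contradiction with countable fibers
  set x₀ : α := f (zlim (fun _ => false)) with hx₀
  have hzfib : ∀ ξ, zlim ξ ∈ f ⁻¹' {x₀} := by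
    intro ξ
    simp only [mem_preimage, mem_singleton_iff]
    exact hfeq ξ (fun _ => false)
  haveI := (hfib x₀).to_subtype
  have hinj2 : Function.Injective (fun ξ : ℕ → Bool => (⟨zlim ξ, hzfib ξ⟩ : (f ⁻¹' {x₀}))) := by
    intro ξ η h
    exact hzinj (congrArg Subtype.val h)
  exact uncountable_funs hinj2.countable

end Core

/-- Projection theorem, topological version. -/
theorem topmain {Z α : Type} [tZ : TopologicalSpace Z] [PolishSpace Z]
    [tα : TopologicalSpace α] [PolishSpace α] [mα : MeasurableSpace α] [BorelSpace α]
    {f : Z → α} (hf : Continuous f) (hfib : ∀ x, (f ⁻¹' {x}).Countable) :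
    MeasurableSet (range f) := by
  borelize Z
  letI := upgradeIsCompletelyMetrizable Z
  letI := upgradeIsCompletelyMetrizable α
  rcases isEmpty_or_nonempty Z with hZ | hZ
  · rw [range_eq_empty f]
    exact MeasurableSet.empty
  · haveI : Nonempty α := ⟨f (Classical.arbitrary Z)⟩
    obtain ⟨S, hc, hgood, hcov⟩ := small_range hf hfib
    have heq : range f = ⋃₀ S := by
      refine subset_antisymm hcov (sUnion_subset fun R hR => ?_)
      obtain ⟨M, _, _, rfl⟩ := hgood R hR
      exact image_subset_range f M
    rw [heq]
    refine MeasurableSet.sUnion hc fun R hR => ?_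
    obtain ⟨M, hM, hinj, rfl⟩ := hgood R hR
    exact hM.image_of_measurable_injOn hf.measurable hinj

/-- Projection theorem, measurable version. -/
theorem main_meas {Q X : Type} [mQ : MeasurableSpace Q] [StandardBorelSpace Q]
    [mX : MeasurableSpace X] [StandardBorelSpace X] (f : Q → X) (hf : Measurable f)
    (hfib : ∀ x, (f ⁻¹' {x}).Countable) : MeasurableSet (range f) := by
  letI := upgradeStandardBorel Q
  letI := upgradeStandardBorel X
  let tQ : TopologicalSpace Q := inferInstance
  obtain ⟨t', t't, f_cont, t'_polish⟩ :
      ∃ t' : TopologicalSpace Q, t' ≤ tQ ∧ @Continuous Q X t' _ f ∧ @PolishSpace Q t' :=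
    hf.exists_continuous
  have hmeq : mQ = @borel Q t' := by
    rw [eq_borel_upgradeStandardBorel Q]
    exact (borel_eq_borel_of_le (t := t') (t' := tQ) t'_polish inferInstance t't).symm
  haveI hbQ : @BorelSpace Q t' mQ := @BorelSpace.mk _ t' mQ hmeq
  exact @topmain Q X t' t'_polish _ _ mX _ f f_cont hfib

/-- **The key projection theorem**: the first-coordinate projection of a Borel subset of a
product of standard Borel spaces with countable sections is Borel (Lusin–Novikov). -/
theorem fst_image_measurable {X Y : Type} [MeasurableSpace X] [StandardBorelSpace X]
    [MeasurableSpace Y] [StandardBorelSpace Y]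
    {C : Set (X × Y)} (hC : MeasurableSet C)
    (hsec : ∀ x : X, {y | (x, y) ∈ C}.Countable) :
    MeasurableSet (Prod.fst '' C) := by
  haveI : StandardBorelSpace C := hC.standardBorel
  have hf : Measurable (fun z : C => (z : X × Y).1) :=
    measurable_fst.comp measurable_subtype_coe
  have hfib : ∀ x, ((fun z : C => (z : X × Y).1) ⁻¹' {x}).Countable := by
    intro x
    haveI := (hsec x).to_subtype
    have hinj : Function.Injective
        (fun z : ((fun z : C => (z : X × Y).1) ⁻¹' {x}) =>
          (⟨(z.val : X × Y).2, by
            have h1 : ((z.val : X × Y).1) = x := z.property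
            have h2 : (z.val : X × Y) ∈ C := z.val.property
            have h3 : (((z.val : X × Y)).1, ((z.val : X × Y)).2) ∈ C := by
              rw [Prod.mk.eta]; exact h2
            rw [h1] at h3
            exact h3⟩ : {y | (x, y) ∈ C})) := by
      rintro ⟨⟨⟨a1, a2⟩, ha⟩, hax⟩ ⟨⟨⟨b1, b2⟩, hb⟩, hbx⟩ h
      have h2 : a2 = b2 := congrArg Subtype.val h
      have h1 : a1 = b1 := by
        have hax' : a1 = x := hax
        have hbx' : b1 = x := hbx
        rw [hax', hbx']
      subst h1; subst h2
      rfl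
    rw [← Set.countable_coe_iff]
    exact hinj.countable
  have hrange : range (fun z : C => (z : X × Y).1) = Prod.fst '' C := by
    ext x
    constructor
    · rintro ⟨z, rfl⟩
      exact ⟨z.val, z.property, rfl⟩
    · rintro ⟨p, hp, rfl⟩
      exact ⟨⟨p, hp⟩, rfl⟩
  rw [← hrange]
  exact main_meas _ hf hfib

end LNProof

/-- every Borel equivalence relation of index ≤ 2 on a quotient Borel space is
generated by a single Borel involution, i.e. it is the orbit equivalence relation of a Borel
action of `ℤ/2ℤ`. -/
theorem stmt_14 {X : Type} [MeasurableSpace X] [StandardBorelSpace X]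
    (E : Setoid X) (hE : CBER E)
    (F : Quotient E → Quotient E → Prop) (hFeq : Equivalence F)
    (hFB : QBorelRel E E {p | F p.1 p.2})
    (hidx : ∀ x y z : Quotient E, F x y → F x z → x = y ∨ x = z ∨ y = z) :
    ∃ f : Quotient E → Quotient E,
      QBorelFun E E f ∧ (∀ x, f (f x) = x) ∧
      ∀ x y : Quotient E, F x y ↔ (y = x ∨ y = f x) := by
  classical
  obtain ⟨hEmeas, hEcount⟩ := hE
  have hquot : ∀ a b : X, Quotient.mk E a = Quotient.mk E b ↔ E.r a b :=
    fun a b => ⟨Quotient.exact, Quotient.sound⟩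
  have partner_unique : ∀ u a b : Quotient E, F u a → a ≠ u → F u b → b ≠ u → a = b := by
    intro u a b ha hna hb hnb
    rcases hidx u a b ha hb with h | h | h
    · exact absurd h.symm hna
    · exact absurd h.symm hnb
    · exact h
  set C : Set (X × X) :=
    {p : X × X | F (Quotient.mk E p.1) (Quotient.mk E p.2)} ∩ {p : X × X | E.r p.1 p.2}ᶜ
    with hCdef
  have hCmeas : MeasurableSet C := by
    have h1 : MeasurableSet {p : X × X | F (Quotient.mk E p.1) (Quotient.mk E p.2)} := hFB
    exact h1.inter hEmeas.compl
  have hCmem : ∀ x y : X, (x, y) ∈ C ↔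
      F (Quotient.mk E x) (Quotient.mk E y) ∧ ¬ E.r x y := by
    intro x y
    simp [hCdef]
  have hsec : ∀ x : X, {y | (x, y) ∈ C}.Countable := by
    intro x
    rcases em (∃ y₀, (x, y₀) ∈ C) with ⟨y₀, hy₀⟩ | h
    · apply (hEcount y₀).mono
      intro y hy
      rw [mem_setOf_eq, hCmem] at hy
      rw [hCmem] at hy₀
      have hne₀ : Quotient.mk E y₀ ≠ Quotient.mk E x := by
        intro hh
        exact hy₀.2 ((hquot x y₀).1 hh.symm)
      have hne : Quotient.mk E y ≠ Quotient.mk E x := by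
        intro hh
        exact hy.2 ((hquot x y).1 hh.symm)
      have h1 : Quotient.mk E y₀ = Quotient.mk E y :=
        partner_unique (Quotient.mk E x) _ _ hy₀.1 hne₀ hy.1 hne
      exact (hquot y₀ y).1 h1
    · have : {y | (x, y) ∈ C} = ∅ := by
        ext y
        simp only [mem_setOf_eq, mem_empty_iff_false, iff_false]
        exact fun hy => h ⟨y, hy⟩
      rw [this]
      exact countable_empty
  set A : Set X := Prod.fst '' C with hAdef
  have hAmeas : MeasurableSet A := LNProof.fst_image_measurable hCmeas hsec
  have hAmem : ∀ x : X, x ∈ A ↔ ∃ y, (x, y) ∈ C := by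
    intro x
    constructor
    · rintro ⟨p, hp, rfl⟩
      exact ⟨p.2, by rwa [Prod.mk.eta]⟩
    · rintro ⟨y, hy⟩
      exact ⟨(x, y), hy, rfl⟩
  have hpart : ∀ x : X, (∃ c, F (Quotient.mk E x) c ∧ c ≠ Quotient.mk E x) ↔ x ∈ A := by
    intro x
    constructor
    · rintro ⟨c, hFc, hne⟩
      obtain ⟨y, rfl⟩ := Quotient.exists_rep c
      refine (hAmem x).2 ⟨y, (hCmem x y).2 ⟨hFc, fun hE' => hne ((hquot x y).2 hE').symm⟩⟩
    · intro hx
      obtain ⟨y, hy⟩ := (hAmem x).1 hx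
      rw [hCmem] at hy
      refine ⟨Quotient.mk E y, hy.1, fun hh => hy.2 ((hquot x y).1 hh.symm)⟩
  -- the involution
  set fq : Quotient E → Quotient E := fun u =>
    if h : ∃ c, F u c ∧ c ≠ u then h.choose else u with hfqdef
  have hfq_pos : ∀ u (h : ∃ c, F u c ∧ c ≠ u), fq u = h.choose := by
    intro u h
    simp only [hfqdef, dif_pos h]
  have hfq_neg : ∀ u, ¬ (∃ c, F u c ∧ c ≠ u) → fq u = u := by
    intro u h
    simp only [hfqdef, dif_neg h]
  have hfq_spec : ∀ u (h : ∃ c, F u c ∧ c ≠ u), F u (fq u) ∧ fq u ≠ u := by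
    intro u h
    rw [hfq_pos u h]
    exact h.choose_spec
  have hfq_eq : ∀ u c, F u c → c ≠ u → fq u = c := by
    intro u c hc hne
    have h : ∃ c, F u c ∧ c ≠ u := ⟨c, hc, hne⟩
    rw [hfq_pos u h]
    exact partner_unique u _ _ h.choose_spec.1 h.choose_spec.2 hc hne
  refine ⟨fq, ?_, ?_, ?_⟩
  · -- Borel
    show MeasurableSet {p : X × X | fq (Quotient.mk E p.1) = Quotient.mk E p.2}
    have hGeq : {p : X × X | fq (Quotient.mk E p.1) = Quotient.mk E p.2} =
        C ∪ ({p : X × X | E.r p.1 p.2} ∩ {p : X × X | p.1 ∈ A}ᶜ) := by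
      ext ⟨x, y⟩
      simp only [mem_setOf_eq, mem_union, mem_inter_iff, mem_compl_iff]
      by_cases hx : ∃ c, F (Quotient.mk E x) c ∧ c ≠ Quotient.mk E x
      · have hxa : x ∈ A := (hpart x).1 hx
        constructor
        · intro hfqy
          left
          rw [hCmem]
          have hspec := hfq_spec _ hx
          rw [hfqy] at hspec
          exact ⟨hspec.1, fun hE' => hspec.2 ((hquot x y).2 hE').symm⟩
        · rintro (hc | ⟨_, hna⟩)
          · rw [hCmem] at hc
            exact hfq_eq _ _ hc.1 (fun hh => hc.2 ((hquot x y).1 hh.symm))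
          · exact absurd hxa hna
      · have hxa : x ∉ A := fun h => hx ((hpart x).2 h)
        rw [hfq_neg _ hx]
        constructor
        · intro hxy
          exact Or.inr ⟨(hquot x y).1 hxy, hxa⟩
        · rintro (hc | ⟨hE', _⟩)
          · rw [hCmem] at hc
            exact absurd ((hpart x).2 ((hAmem x).2 ⟨y, (hCmem x y).2 hc⟩)) hx
          · exact (hquot x y).2 hE'
    rw [hGeq]
    exact hCmeas.union (hEmeas.inter (hAmeas.preimage measurable_fst).compl)
  · -- involution
    intro u
    by_cases h : ∃ c, F u c ∧ c ≠ u
    · have hspec := hfq_spec u h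
      have h' : ∃ c, F (fq u) c ∧ c ≠ fq u :=
        ⟨u, hFeq.symm hspec.1, fun hh => hspec.2 hh.symm⟩
      exact hfq_eq (fq u) u (hFeq.symm hspec.1) (fun hh => hspec.2 hh.symm)
    · rw [hfq_neg u h, hfq_neg u h]
  · -- generation
    intro u c
    constructor
    · intro hFc
      by_cases hne : c = u
      · exact Or.inl hne
      · exact Or.inr (hfq_eq u c hFc hne).symm
    · rintro (rfl | rfl)
      · exact hFeq.refl _
      · by_cases h : ∃ c, F u c ∧ c ≠ u
        · exact (hfq_spec u h).1
        · rw [hfq_neg u h]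
          exact hFeq.refl _
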